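/- No Vitali set is α-winning: for every Vitali set V ⊆ ℝ and every α ∈ (0,1), there exists β ∈ (0,1) such that Alice does not have a winning strategy in Schmidt's (α,β)-game with target V. -/

import Mathlib

namespace Schmidt

/-- A closed interval, given by its two endpoints. -/
abbrev Ivl := ℝ × ℝ

/-- The diameter (length) of an interval. -/
def diam (I : Ivl) : ℝ := I.2 - I.1

/-- The set of points of an interval. -/
def toSet (I : Ivl) : Set ℝ := Set.Icc I.1 I.2

/-- `Sub I J` means the interval `I` is contained in the interval `J`. -/
def Sub (I J : Ivl) : Prop := toSet I ⊆ toSet J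

/-- A strategy: a function producing a move from the finite sequence of
the opponent's moves so far. -/
abbrev Strategy := List Ivl → Ivl

/-- The list of Bob's moves `B 0, …, B n`. -/
def hist (B : ℕ → Ivl) (n : ℕ) : List Ivl := List.ofFn (fun i : Fin (n + 1) => B i)

/-- Bob's sequence of moves `B` is a legal play against Alice's strategy `σ`
in the `(α,β)`-game: `B 0` has positive diameter and each `B (n+1)` is a
subinterval of Alice's previous move `σ (hist B n)` of `β` times its diameter. -/
def BobPlays (β : ℝ) (σ : Strategy) (B : ℕ → Ivl) : Prop :=
  0 < diam (B 0) ∧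
  ∀ n, Sub (B (n + 1)) (σ (hist B n)) ∧ diam (B (n + 1)) = β * diam (σ (hist B n))

/-- `σ` is a legal strategy for Alice in the `(α,β)`-game: whenever Bob's
moves so far are legal, Alice's response is a subinterval of Bob's last move
of `α` times its diameter. -/
def AliceLegal (α β : ℝ) (σ : Strategy) : Prop :=
  ∀ B : ℕ → Ivl, ∀ n : ℕ, 0 < diam (B 0) →
    (∀ m, m < n → Sub (B (m + 1)) (σ (hist B m)) ∧
      diam (B (m + 1)) = β * diam (σ (hist B m))) →
    Sub (σ (hist B n)) (B n) ∧ diam (σ (hist B n)) = α * diam (B n)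

/-- `σ` is a winning strategy for Alice in Schmidt's `(α,β)`-game with target `T`:
it is legal, and in every run against it every point of the intersection of
Alice's moves lies in `T`. -/
def AliceWinsWith (α β : ℝ) (T : Set ℝ) (σ : Strategy) : Prop :=
  AliceLegal α β σ ∧
  ∀ B : ℕ → Ivl, BobPlays β σ B →
    ∀ x : ℝ, (∀ n, x ∈ toSet (σ (hist B n))) → x ∈ T

/-- `T` is `(α,β)`-winning: Alice has a winning strategy. -/
def Winning (α β : ℝ) (T : Set ℝ) : Prop := ∃ σ, AliceWinsWith α β T σ

/-- The list of Alice's moves `A 0, …, A (n-1)`. -/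
def histA (A : ℕ → Ivl) (n : ℕ) : List Ivl := List.ofFn (fun i : Fin n => A i)

/-- Alice's sequence of moves `A` is a legal play against Bob's strategy `τ`. -/
def AlicePlays (α : ℝ) (τ : Strategy) (A : ℕ → Ivl) : Prop :=
  ∀ n, Sub (A n) (τ (histA A n)) ∧ diam (A n) = α * diam (τ (histA A n))

/-- `τ` is a legal strategy for Bob in the `(α,β)`-game. -/
def BobLegal (α β : ℝ) (τ : Strategy) : Prop :=
  0 < diam (τ []) ∧
  ∀ A : ℕ → Ivl, ∀ n : ℕ,
    (∀ m, m ≤ n → Sub (A m) (τ (histA A m)) ∧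
      diam (A m) = α * diam (τ (histA A m))) →
    Sub (τ (histA A (n + 1))) (A n) ∧ diam (τ (histA A (n + 1))) = β * diam (A n)

/-- `τ` is a winning strategy for Bob in Schmidt's `(α,β)`-game with target `T`. -/
def BobWinsWith (α β : ℝ) (T : Set ℝ) (τ : Strategy) : Prop :=
  BobLegal α β τ ∧
  ∀ A : ℕ → Ivl, AlicePlays α τ A →
    ∀ x : ℝ, (∀ n, x ∈ toSet (A n)) → x ∉ T

/-- Bob has a winning strategy in the `(α,β)`-game with target `T`. -/
def BobWinning (α β : ℝ) (T : Set ℝ) : Prop := ∃ τ, BobWinsWith α β T τ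

/-- `V` is a Vitali set: it contains exactly one representative of each
coset of `ℚ` in `ℝ`. -/
def IsVitali (V : Set ℝ) : Prop :=
  ∀ x : ℝ, ∃! v : ℝ, v ∈ V ∧ ∃ q : ℚ, x - v = (q : ℝ)

/-- `P` is a partial Vitali set: it contains at most one representative of
each coset of `ℚ` in `ℝ`. -/
def IsPartialVitali (P : Set ℝ) : Prop :=
  ∀ x ∈ P, ∀ y ∈ P, (∃ q : ℚ, x - y = (q : ℝ)) → x = y

/-- `T` is `(α,β,I)`-winning: Alice has a winning strategy in Schmidt's
`(α,β)`-game with target `T` when Bob's first move is required to be `I`. -/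
def WinningFrom (α β : ℝ) (T : Set ℝ) (I : Ivl) : Prop :=
  ∃ σ : Strategy,
    (∀ B : ℕ → Ivl, B 0 = I → ∀ n : ℕ,
      (∀ m, m < n → Sub (B (m + 1)) (σ (hist B m)) ∧
        diam (B (m + 1)) = β * diam (σ (hist B m))) →
      Sub (σ (hist B n)) (B n) ∧ diam (σ (hist B n)) = α * diam (B n)) ∧
    (∀ B : ℕ → Ivl, B 0 = I → BobPlays β σ B →
      ∀ x : ℝ, (∀ n, x ∈ toSet (σ (hist B n))) → x ∈ T)


/-- Shift an interval by `t`. -/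
def sh (I : Ivl) (t : ℝ) : Ivl := (I.1 + t, I.2 + t)

lemma mem_sh {x : ℝ} {I : Ivl} {t : ℝ} : x ∈ toSet (sh I t) ↔ x - t ∈ toSet I := by
  simp only [toSet, sh, Set.mem_Icc]
  constructor <;> rintro ⟨h1, h2⟩ <;> constructor <;> linarith

lemma diam_sh (I : Ivl) (t : ℝ) : diam (sh I t) = diam I := by
  simp [diam, sh]

lemma Sub_sh_iff_left {I J : Ivl} {t : ℝ} : Sub (sh I t) J ↔ ∀ x ∈ toSet I, x + t ∈ toSet J := by
  constructor
  · intro h x hx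
    exact h (mem_sh.2 (by simpa using hx))
  · intro h x hx
    have := h (x - t) (mem_sh.1 hx)
    simpa using this

/-- Bob''s counter-play against `σ`: feed back `σ`''s own answers to the
(-1)-shifted play, shifted by `+1`. -/
def Bseq (σ : Strategy) : ℕ → Ivl
  | 0 => ((0 : ℝ), (1 : ℝ))
  | n + 1 => sh (σ (List.ofFn (fun i : Fin (n + 1) =>
      sh (σ (List.ofFn (fun j : Fin (i.1 + 1) => Bseq σ j.1))) (-1)))) 1
termination_by n => n
decreasing_by exact lt_of_lt_of_le j.isLt (Nat.succ_le_succ (Nat.le_of_lt_succ i.isLt))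

/-- The shifted second play. -/
def Cseq (σ : Strategy) (n : ℕ) : Ivl := sh (σ (hist (Bseq σ) n)) (-1)

lemma Bseq_succ (σ : Strategy) (n : ℕ) :
    Bseq σ (n + 1) = sh (σ (hist (Cseq σ) n)) 1 := by
  rw [Bseq]
  congr 2

/-- no Vitali set is `α`-winning. -/
theorem stmt3 (V : Set ℝ) (hV : IsVitali V) (α : ℝ) (hα0 : 0 < α) (hα1 : α < 1) :
    ∃ β : ℝ, 0 < β ∧ β < 1 ∧ ¬ Winning α β V := by
  refine ⟨α, hα0, hα1, ?_⟩
  rintro ⟨σ, hLegal, hWin⟩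
  set B := Bseq σ with hB
  set C := Cseq σ with hC
  set A : ℕ → Ivl := fun n => σ (hist B n) with hA
  set D : ℕ → Ivl := fun n => σ (hist C n) with hD
  have hB0 : B 0 = ((0:ℝ), (1:ℝ)) := by rw [hB, Bseq]
  have hdB0 : diam (B 0) = 1 := by simp [hB0, diam]
  have hBsucc : ∀ n, B (n + 1) = sh (D n) 1 := fun n => Bseq_succ σ n
  have hCdef : ∀ n, C n = sh (A n) (-1) := fun n => rfl
  -- the key simultaneous legality facts
  have key : ∀ n : ℕ, (Sub (A n) (B n) ∧ diam (A n) = α * diam (B n)) ∧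
      (Sub (D n) (C n) ∧ diam (D n) = α * diam (C n)) := by
    intro n
    induction n using Nat.strong_induction_on with
    | _ n ih =>
      have hApart : Sub (A n) (B n) ∧ diam (A n) = α * diam (B n) := by
        refine hLegal B n (by rw [hdB0]; norm_num) ?_
        intro m hm
        obtain ⟨⟨_, _⟩, hDm⟩ := ih m hm
        constructor
        · rw [hBsucc m]
          rw [Sub_sh_iff_left]
          intro x hx
          have hx' := hDm.1 hx
          rw [hCdef m, mem_sh] at hx'
          simpa using hx'
        · rw [hBsucc m, diam_sh, hDm.2, hCdef m, diam_sh]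
      refine ⟨hApart, ?_⟩
      have hA0 : Sub (A 0) (B 0) ∧ diam (A 0) = α * diam (B 0) := by
        rcases Nat.eq_zero_or_pos n with rfl | hn
        · exact hApart
        · exact (ih 0 hn).1
      refine hLegal C n ?_ ?_
      · rw [hCdef 0, diam_sh, hA0.2, hdB0]; simpa using hα0
      · intro m hm
        have hAm1 : Sub (A (m+1)) (B (m+1)) ∧ diam (A (m+1)) = α * diam (B (m+1)) := by
          rcases Nat.lt_or_ge (m+1) n with h | h
          · exact (ih (m+1) h).1
          · have : m + 1 = n := le_antisymm (Nat.succ_le_of_lt hm) h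
            rw [this]; exact hApart
        constructor
        · rw [hCdef (m+1)]
          rw [Sub_sh_iff_left]
          intro x hx
          have hx' := hAm1.1 hx
          rw [hBsucc m, mem_sh] at hx'
          rw [← sub_eq_add_neg]; exact hx'
        · rw [hCdef (m+1), diam_sh, hAm1.2, hBsucc m, diam_sh]
  -- B is a legal Bob play
  have hBplays : BobPlays α σ B := by
    refine ⟨by rw [hdB0]; norm_num, ?_⟩
    intro n
    obtain ⟨_, hDn⟩ := key n
    constructor
    · rw [hBsucc n, Sub_sh_iff_left]
      intro x hx
      have hx' := hDn.1 hx
      rw [hCdef n, mem_sh] at hx'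
      simpa using hx'
    · rw [hBsucc n, diam_sh, hDn.2, hCdef n, diam_sh]
  -- C is a legal Bob play
  have hCplays : BobPlays α σ C := by
    constructor
    · rw [hCdef 0, diam_sh, (key 0).1.2, hdB0]; simpa using hα0
    · intro n
      constructor
      · rw [hCdef (n+1), Sub_sh_iff_left]
        intro x hx
        have hx' := (key (n+1)).1.1 hx
        rw [hBsucc n, mem_sh] at hx'
        rw [← sub_eq_add_neg]; exact hx'
      · rw [hCdef (n+1), diam_sh, (key (n+1)).1.2, hBsucc n, diam_sh]
  -- positivity of diameters
  have hdB : ∀ n, 0 < diam (B n) := by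
    intro n
    induction n with
    | zero => rw [hdB0]; norm_num
    | succ n ihn =>
      rw [hBsucc n, diam_sh, (key n).2.2, hCdef n, diam_sh, (key n).1.2]
      positivity
  have hdA : ∀ n, 0 < diam (A n) := by
    intro n; rw [(key n).1.2]; exact mul_pos hα0 (hdB n)
  have hAne : ∀ n, (A n).1 ≤ (A n).2 := by
    intro n; have := hdA n; unfold diam at this; linarith
  -- nesting of Alice''s intervals
  have hnest : ∀ n, toSet (A (n+1)) ⊆ toSet (A n) := by
    intro n x hx
    have h1 := (key (n+1)).1.1 hx
    rw [hBsucc n, mem_sh] at h1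
    have h2 := (key n).2.1 h1
    rw [hCdef n, mem_sh] at h2
    simpa using h2
  have hmem : ∀ m n, m ≤ n → toSet (A n) ⊆ toSet (A m) := by
    intro m n h
    induction h with
    | refl => exact subset_rfl
    | step _ ih => exact fun x hx => ih (hnest _ hx)
  have hbdd : BddAbove (Set.range fun n => (A n).1) := by
    refine ⟨(A 0).2, ?_⟩
    rintro _ ⟨n, rfl⟩
    exact (hmem 0 n (Nat.zero_le n) ⟨le_rfl, hAne n⟩).2
  set x := ⨆ n, (A n).1 with hx
  have hxmem : ∀ n, x ∈ toSet (A n) := by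
    intro n
    constructor
    · exact le_ciSup hbdd n
    · refine ciSup_le ?_
      intro m
      rcases le_total m n with h | h
      · exact (hmem m n h ⟨le_rfl, hAne n⟩).1.trans (hAne n)
      · exact (hmem n m h ⟨le_rfl, hAne m⟩).2
  have hxV : x ∈ V := hWin B hBplays x (fun n => hxmem n)
  have hx1V : x - 1 ∈ V := by
    refine hWin C hCplays (x - 1) ?_
    intro n
    have h1 := (key (n+1)).1.1 (hxmem (n+1))
    rw [hBsucc n, mem_sh] at h1
    exact h1
  obtain ⟨v, _, huniq⟩ := hV x
  have e1 : x = v := huniq x ⟨hxV, 0, by simp⟩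
  have e2 : x - 1 = v := huniq (x - 1) ⟨hx1V, 1, by push_cast; ring⟩
  linarith

end Schmidt
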